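/- Let C be a shortest even hole of a graph G, let u and v be distinct vertices of C, let the uv-path P of G be a C-shallow worst C-shortcut, and let C1, C2 be the uv-paths of C with ‖C1‖ ≤ ‖C2‖. Then ‖P‖ = ‖C1‖ − 1. -/

import Mathlib

open SimpleGraph

variable {V : Type*}

/-- The vertex set of a walk. -/
def suppSet {G : SimpleGraph V} {u v : V} (w : G.Walk u v) : Set V :=
  {x | x ∈ w.support}

/-- An induced cycle of `G`. -/
def IsInducedCycle (G : SimpleGraph V) {r : V} (w : G.Walk r r) : Prop :=
  w.IsCycle ∧ ∀ a b : V, a ∈ w.support → b ∈ w.support → G.Adj a b → s(a, b) ∈ w.edges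

/-- A hole of `G`: an induced cycle with at least 4 vertices. -/
def IsHole (G : SimpleGraph V) {r : V} (w : G.Walk r r) : Prop :=
  IsInducedCycle G w ∧ 4 ≤ w.length

/-- An even hole of `G`. -/
def IsEvenHole (G : SimpleGraph V) {r : V} (w : G.Walk r r) : Prop :=
  IsHole G w ∧ Even w.length

/-- A shortest even hole of `G`. -/
def IsShortestEvenHole (G : SimpleGraph V) {r : V} (w : G.Walk r r) : Prop :=
  IsEvenHole G w ∧ ∀ (y : V) (w' : G.Walk y y), IsEvenHole G w' → w.length ≤ w'.length

/-- `P` is a path of `G` all of whose edges lie on the walk `c`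
(used for "a `uv`-path of `C`"). -/
def IsPathOf (G : SimpleGraph V) {p q u v : V} (c : G.Walk p q) (P : G.Walk u v) : Prop :=
  P.IsPath ∧ ∀ e ∈ P.edges, e ∈ c.edges

/-- The distance `d_C(u,v)` between `u` and `v` within the cycle `c`. -/
noncomputable def cycleDist (G : SimpleGraph V) {r : V} (c : G.Walk r r) (u v : V) : ℕ :=
  sInf {n | ∃ P : G.Walk u v, IsPathOf G c P ∧ P.length = n}

/-- The induced subgraph `G[S]` is a hole of `G`. -/
def IsHoleOn (G : SimpleGraph V) (S : Set V) : Prop :=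
  ∃ (r : V) (w : G.Walk r r), IsHole G w ∧ suppSet w = S

/-- The induced subgraph `G[S]` is an even hole of `G`. -/
def IsEvenHoleOn (G : SimpleGraph V) (S : Set V) : Prop :=
  ∃ (r : V) (w : G.Walk r r), IsEvenHole G w ∧ suppSet w = S

/-- The induced subgraph `G[S]` is a shortest even hole of `G`. -/
def IsShortestEvenHoleOn (G : SimpleGraph V) (S : Set V) : Prop :=
  ∃ (r : V) (w : G.Walk r r), IsShortestEvenHole G w ∧ suppSet w = S

/-- `P` is `C`-good: the union of `P` and one of the two `uv`-paths of `C`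
is again a shortest even hole of `G`. -/
def CGood (G : SimpleGraph V) {r u v : V} (c : G.Walk r r) (P : G.Walk u v) : Prop :=
  ∃ Q : G.Walk u v, IsPathOf G c Q ∧ IsShortestEvenHoleOn G (suppSet P ∪ suppSet Q)

/-- The standing assumptions for `C`-shortcuts: `P` is a `uv`-path of `G` for distinct
nonadjacent vertices `u`, `v` of `C`. -/
def ShortcutSetup (G : SimpleGraph V) {r u v : V} (c : G.Walk r r) (P : G.Walk u v) : Prop :=
  P.IsPath ∧ u ≠ v ∧ ¬G.Adj u v ∧ u ∈ c.support ∧ v ∈ c.support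

/-- `P` is a `C`-shortcut: `2 ≤ ‖P‖ ≤ d_C(u,v)` and `‖P‖ < ‖C‖/4`. -/
def CShortcut (G : SimpleGraph V) {r u v : V} (c : G.Walk r r) (P : G.Walk u v) : Prop :=
  2 ≤ P.length ∧ P.length ≤ cycleDist G c u v ∧ 4 * P.length < c.length

/-- `C1` and `C2` are the two `uv`-paths of the cycle `c`. -/
def ArcPair (G : SimpleGraph V) {r u v : V} (c : G.Walk r r) (C1 C2 : G.Walk u v) : Prop :=
  IsPathOf G c C1 ∧ IsPathOf G c C2 ∧ C1.length + C2.length = c.length ∧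
    ∀ e ∈ c.edges, e ∈ C1.edges ∨ e ∈ C2.edges

/-- `P` is `C`-shallow: `‖P‖ ≥ d_C(u,v) − 1` and `G[P ∪ C2]` is a hole, where `C2` is the
longer of the two `uv`-paths of `C`. -/
def CShallow (G : SimpleGraph V) {r u v : V} (c : G.Walk r r) (P : G.Walk u v) : Prop :=
  cycleDist G c u v - 1 ≤ P.length ∧
    ∀ C1 C2 : G.Walk u v, ArcPair G c C1 C2 → C1.length ≤ C2.length →
      IsHoleOn G (suppSet P ∪ suppSet C2)

/-- `P` is a worst `C`-shortcut. -/
def WorstCShortcut (G : SimpleGraph V) {r u v : V} (c : G.Walk r r) (P : G.Walk u v) : Prop :=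
  ShortcutSetup G c P ∧ CShortcut G c P ∧ ¬CGood G c P ∧
    ∀ (u' v' : V) (P' : G.Walk u' v'),
      ShortcutSetup G c P' → CShortcut G c P' → ¬CGood G c P' →
        (P.length < P'.length ∨
          (P.length = P'.length ∧ cycleDist G c u' v' ≤ cycleDist G c u v))

/-- `C` is good in `G`: every `C`-shortcut is `C`-good. -/
def GoodHole (G : SimpleGraph V) {r : V} (c : G.Walk r r) : Prop :=
  ∀ (u v : V) (P : G.Walk u v), ShortcutSetup G c P → CShortcut G c P → CGood G c P

/-- `P` is a shortest `uv`-path of `G`. -/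
def IsShortestPath (G : SimpleGraph V) {u v : V} (P : G.Walk u v) : Prop :=
  P.IsPath ∧ ∀ Q : G.Walk u v, P.length ≤ Q.length

/-- The closed neighborhood `N_G[S]` of a vertex set `S`. -/
def closedNbhd (G : SimpleGraph V) (S : Set V) : Set V :=
  S ∪ {x | ∃ y ∈ S, G.Adj y x}

/-- The subgraph of `G` induced on `S` (kept on the same vertex type: edges of `G`
with both ends in `S`). -/
def restrictTo (G : SimpleGraph V) (S : Set V) : SimpleGraph V where
  Adj a b := G.Adj a b ∧ a ∈ S ∧ b ∈ S
  symm := ⟨fun a b h => ⟨h.1.symm, h.2.2, h.2.1⟩⟩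
  loopless := ⟨fun a h => G.loopless.1 a h.1⟩

/-- The vertex set of `H(u,v,x,y) = G[(V(G) \ N_G[V(P_uv ∪ P_xy) \ {u,v}]) ∪ {u,v}]`. -/
def Hverts (G : SimpleGraph V) {u v a b : V} (Puv : G.Walk u v) (Pxy : G.Walk a b) : Set V :=
  (Set.univ \ closedNbhd G ((suppSet Puv ∪ suppSet Pxy) \ {u, v})) ∪ {u, v}

/-- The graph `H(u,v,x,y)`. -/
def Hgraph (G : SimpleGraph V) {u v a b : V} (Puv : G.Walk u v) (Pxy : G.Walk a b) :
    SimpleGraph V :=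
  restrictTo G (Hverts G Puv Pxy)

/-- `G` is shallow. -/
def ShallowGraph (G : SimpleGraph V) : Prop :=
  ∃ (r : V) (c : G.Walk r r), IsShortestEvenHole G c ∧
    ∀ (u v : V) (P : G.Walk u v), WorstCShortcut G c P → CShallow G c P

/-- `G` is anti-shallow. -/
def AntiShallowGraph (G : SimpleGraph V) : Prop :=
  ∀ (r : V) (c : G.Walk r r), IsShortestEvenHole G c → ¬GoodHole G c →
    ∀ (u v : V) (P : G.Walk u v), WorstCShortcut G c P → ¬CShallow G c P

/-- The induced subgraph `G[S]` is a path with end-vertices `u` and `v`. -/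
def IsInducedPathOn (G : SimpleGraph V) (u v : V) (S : Set V) : Prop :=
  ∃ Q : G.Walk u v, Q.IsPath ∧ suppSet Q = S ∧
    ∀ a b : V, a ∈ S → b ∈ S → G.Adj a b → s(a, b) ∈ Q.edges

section Aux
open Walk
set_option linter.unusedSectionVars false
variable {G : SimpleGraph V} [DecidableEq V]

lemma mem_support_of_mem_edge {a b : V} {p : G.Walk a b} {e : Sym2 V} {x : V}
    (he : e ∈ p.edges) (hx : x ∈ e) : x ∈ p.support := by
  induction e with
  | _ y z =>
    rcases Sym2.mem_iff.mp hx with rfl | rfl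
    · exact p.fst_mem_support_of_mem_edges he
    · exact p.snd_mem_support_of_mem_edges he

lemma edge_eq_first {u x b : V} (h : G.Adj u x) (Q : G.Walk x b)
    (hp : (Walk.cons h Q).IsPath) {e : Sym2 V} (he : e ∈ (Walk.cons h Q).edges)
    (hu : u ∈ e) : e = s(u, x) := by
  rw [edges_cons, List.mem_cons] at he
  rcases he with rfl | he
  · rfl
  · exact absurd (mem_support_of_mem_edge he hu)
      ((Walk.cons_isPath_iff h Q).mp hp).2

lemma takeUntil_start {a b : V} (q : G.Walk a b) (h : a ∈ q.support) :
    q.takeUntil a h = Walk.nil := by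
  cases q with
  | nil => simp [takeUntil]
  | cons h p => simp [takeUntil]

lemma takeUntil_end {a b : V} (q : G.Walk a b) (hq : q.IsPath) (h : b ∈ q.support) :
    q.takeUntil b h = q := by
  induction q with
  | nil => simp [takeUntil]
  | @cons x y z hadj p ih =>
    have hne : x ≠ z := by
      rintro rfl
      exact ((Walk.cons_isPath_iff hadj p).mp hq).2 p.end_mem_support
    have hz : z ∈ p.support := p.end_mem_support
    simp [takeUntil, hne, ih ((Walk.cons_isPath_iff hadj p).mp hq).1 hz]

lemma length_takeUntil_append {a b d v : V} (q1 : G.Walk a b) (q2 : G.Walk b d)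
    (hv : v ∈ q1.support) (h : v ∈ (q1.append q2).support) :
    ((q1.append q2).takeUntil v h).length = (q1.takeUntil v hv).length := by
  induction q1 with
  | nil =>
    simp only [mem_support_nil_iff] at hv
    subst hv
    simp [takeUntil_start]
  | @cons x y z hadj p ih =>
    by_cases hxv : x = v
    · subst hxv
      simp [takeUntil_start]
    · have hv' : v ∈ p.support := by
        rcases (by simpa using hv) with rfl | h'
        · exact absurd rfl hxv
        · exact h'
      have h' : v ∈ (p.append q2).support :=
        (mem_support_append_iff _ _).mpr (Or.inl hv')
      simp only [cons_append]
      simp [takeUntil, hxv, ih q2 hv' h']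

lemma length_takeUntil_add_reverse {a b v : V} (p : G.Walk a b) (hp : p.IsPath)
    (hv : v ∈ p.support) (hv' : v ∈ p.reverse.support) :
    (p.takeUntil v hv).length + (p.reverse.takeUntil v hv').length = p.length := by
  induction p with
  | nil =>
    simp only [mem_support_nil_iff] at hv
    subst hv
    simp [takeUntil_start]
  | @cons x y z hadj p ih =>
    by_cases hxv : x = v
    · subst hxv
      rw [takeUntil_start, takeUntil_end _ hp.reverse]
      simp
    · have hv2 : v ∈ p.support := by
        rcases (by simpa using hv) with rfl | h'
        · exact absurd rfl hxv
        · exact h'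
      have hv3 : v ∈ p.reverse.support := by simpa using hv2
      have hv4 : v ∈ (p.reverse.append (Walk.cons hadj.symm Walk.nil)).support :=
        (mem_support_append_iff _ _).mpr (Or.inl hv3)
      have hrc : ((Walk.cons hadj p).reverse.takeUntil v hv').length
          = (p.reverse.takeUntil v hv3).length := by
        simp only [reverse_cons]
        exact length_takeUntil_append p.reverse (Walk.cons hadj.symm Walk.nil) hv3 hv4
      rw [hrc]
      have hL : ((Walk.cons hadj p).takeUntil v hv).length
          = (p.takeUntil v hv2).length + 1 := by
        simp [takeUntil, hxv]
      rw [hL]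
      have := ih hp.of_cons hv2 hv3
      simp only [length_cons]
      omega

lemma walk_eq_takeUntil {t : V} : ∀ {u v : V} (Q : G.Walk u v) (W : G.Walk u t),
    W.IsPath → Q.IsPath → (∀ e ∈ Q.edges, e ∈ W.edges) →
    ∃ hv : v ∈ W.support, Q = W.takeUntil v hv := by
  intro u v Q
  induction Q with
  | nil =>
    intro W _ _ _
    exact ⟨W.start_mem_support, (takeUntil_start W _).symm⟩
  | @cons u x v hadj Q' ih =>
    intro W hW hQ hsub
    cases W with
    | nil =>
      have h0 := hsub _ (by rw [edges_cons]; exact List.mem_cons_self)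
      simp at h0
    | @cons _ y _ hw W₀ =>
      have hfirst : s(u, x) ∈ (Walk.cons hw W₀).edges := hsub _ (by simp)
      have hxy : x = y :=
        Sym2.congr_right.mp (edge_eq_first hw W₀ hW hfirst (by simp))
      subst hxy
      have hsub' : ∀ e ∈ Q'.edges, e ∈ W₀.edges := by
        intro e he
        rcases (by simpa using hsub e (by simp [he]) :
            e = s(u, x) ∨ e ∈ W₀.edges) with rfl | h2
        · exact absurd (mem_support_of_mem_edge he (by simp))
            ((cons_isPath_iff _ _).mp hQ).2
        · exact h2
      obtain ⟨hv, heq⟩ := ih W₀ hW.of_cons hQ.of_cons hsub'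
      have hvne : u ≠ v := fun h =>
        ((cons_isPath_iff _ _).mp hQ).2 (h ▸ Q'.end_mem_support)
      refine ⟨by simp [hv], ?_⟩
      simp only [takeUntil, dif_neg hvne]
      rw [heq]

lemma classify_path_in_cycle {u v y : V} (h1 : G.Adj u y) (w1 : G.Walk y u)
    (hcyc : (Walk.cons h1 w1).IsCycle) (Q : G.Walk u v) (huv : u ≠ v)
    (hQ : Q.IsPath) (hsub : ∀ e ∈ Q.edges, e ∈ (Walk.cons h1 w1).edges) :
    (∃ hv : v ∈ w1.reverse.support, Q = w1.reverse.takeUntil v hv) ∨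
    (∃ hv : v ∈ w1.support, Q = Walk.cons h1 (w1.takeUntil v hv)) := by
  have hw1path : w1.IsPath := by
    rw [isPath_def]
    have := (Walk.isCycle_def _).mp hcyc
    simpa using this.2.2
  cases Q with
  | nil => exact absurd rfl huv
  | @cons _ x _ hq Q₀ =>
    by_cases hxy : x = y
    · subst hxy
      have hsub' : ∀ e ∈ Q₀.edges, e ∈ w1.edges := by
        intro e he
        rcases (by simpa using hsub e (by simp [he]) :
            e = s(u, x) ∨ e ∈ w1.edges) with rfl | h2
        · exact absurd (mem_support_of_mem_edge he (by simp))
            ((cons_isPath_iff _ _).mp hQ).2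
        · exact h2
      obtain ⟨hv, heq⟩ := walk_eq_takeUntil Q₀ w1 hw1path hQ.of_cons hsub'
      right
      exact ⟨hv, by rw [heq]⟩
    · have hne : s(u, y) ∉ (Walk.cons hq Q₀).edges := by
        intro hmem
        have := edge_eq_first hq Q₀ hQ hmem (by simp)
        exact hxy (Sym2.congr_right.mp this).symm
      have hsub' : ∀ e ∈ (Walk.cons hq Q₀).edges, e ∈ w1.reverse.edges := by
        intro e he
        rw [edges_reverse, List.mem_reverse]
        rcases (by simpa using hsub e he : e = s(u, y) ∨ e ∈ w1.edges) with rfl | h2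
        · exact absurd he hne
        · exact h2
      obtain ⟨hv, heq⟩ := walk_eq_takeUntil (Walk.cons hq Q₀) w1.reverse
        hw1path.reverse hQ hsub'
      exact Or.inl ⟨hv, heq⟩

lemma two_paths_in_cycle {rr u v : V} {w : G.Walk rr rr} (hw : w.IsCycle)
    (Q1 Q2 : G.Walk u v) (huv : u ≠ v) (h1 : Q1.IsPath) (h2 : Q2.IsPath)
    (e1 : ∀ e ∈ Q1.edges, e ∈ w.edges) (e2 : ∀ e ∈ Q2.edges, e ∈ w.edges) :
    Q1.length = Q2.length ∨ Q1.length + Q2.length = w.length := by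
  have hu : u ∈ w.support := by
    cases Q1 with
    | nil => exact absurd rfl huv
    | cons hq Q₀ =>
      exact mem_support_of_mem_edge (e1 _ (by rw [edges_cons]; exact List.mem_cons_self))
        (by simp)
  set w' := w.rotate u hu with hw'def
  have hw'cyc : w'.IsCycle := hw.rotate hu
  have hperm : ∀ e, e ∈ w.edges ↔ e ∈ w'.edges := fun e =>
    ((rotate_edges w u hu).perm.mem_iff).symm
  have hlen' : w'.length = w.length := by
    rw [← length_edges, ← length_edges]
    exact (rotate_edges w u hu).perm.length_eq
  have e1' : ∀ e ∈ Q1.edges, e ∈ w'.edges := fun e he => (hperm e).mp (e1 e he)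
  have e2' : ∀ e ∈ Q2.edges, e ∈ w'.edges := fun e he => (hperm e).mp (e2 e he)
  cases hw' : w' with
  | nil => exact absurd (hw' ▸ hw'cyc) Walk.IsCycle.not_of_nil
  | @cons _ y _ hy w1 =>
    rw [hw'] at hw'cyc e1' e2'
    have hw1path : w1.IsPath := by
      rw [isPath_def]
      have := (Walk.isCycle_def _).mp hw'cyc
      simpa using this.2.2
    have hc1 := classify_path_in_cycle hy w1 hw'cyc Q1 huv h1 e1'
    have hc2 := classify_path_in_cycle hy w1 hw'cyc Q2 huv h2 e2'
    have hlen1 : w.length = w1.length + 1 := by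
      rw [← hlen', hw']; simp
    rcases hc1 with ⟨hv1, heq1⟩ | ⟨hv1, heq1⟩ <;>
      rcases hc2 with ⟨hv2, heq2⟩ | ⟨hv2, heq2⟩
    · exact Or.inl (by rw [heq1, heq2])
    · right
      rw [heq1, heq2]
      have := length_takeUntil_add_reverse w1 hw1path hv2 hv1
      simp only [length_cons]
      omega
    · right
      rw [heq1, heq2]
      have := length_takeUntil_add_reverse w1 hw1path hv1 hv2
      simp only [length_cons]
      omega
    · exact Or.inl (by rw [heq1, heq2])

end Aux

theorem stmt6 (G : SimpleGraph V) {r u v : V} (c : G.Walk r r)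
    (hC : IsShortestEvenHole G c) (P : G.Walk u v)
    (hworst : WorstCShortcut G c P) (hshallow : CShallow G c P)
    (C1 C2 : G.Walk u v) (harc : ArcPair G c C1 C2) (hle : C1.length ≤ C2.length) :
    P.length + 1 = C1.length := by
  classical
  obtain ⟨⟨⟨⟨hc_cyc, hc_ind⟩, hc_len4⟩, hc_even⟩, hc_min⟩ := hC
  obtain ⟨⟨hPpath, huv, hnadj, hu_c, hv_c⟩, ⟨h2P, hPd, h4P⟩, hnotgood, -⟩ := hworst
  obtain ⟨⟨hC1path, hC1sub⟩, ⟨hC2path, hC2sub⟩, hsumc, harc_cov⟩ := harc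
  -- Step 1 : cycleDist G c u v = C1.length
  have hdle : cycleDist G c u v ≤ C1.length :=
    Nat.sInf_le ⟨C1, ⟨hC1path, hC1sub⟩, rfl⟩
  have hdeq : cycleDist G c u v = C1.length := by
    have hne : {n | ∃ Q : G.Walk u v, IsPathOf G c Q ∧ Q.length = n}.Nonempty :=
      ⟨C1.length, C1, ⟨hC1path, hC1sub⟩, rfl⟩
    obtain ⟨Q, ⟨hQpath, hQsub⟩, hQlen⟩ := Nat.sInf_mem hne
    have hQlen' : Q.length = cycleDist G c u v := hQlen
    rcases two_paths_in_cycle hc_cyc Q C1 huv hQpath hC1path hQsub hC1sub with h | h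
    · omega
    · omega
  -- Step 2 : the hole on P ∪ C2
  obtain ⟨rw', w, hw_hole, hw_supp⟩ :=
    hshallow.2 C1 C2 ⟨⟨hC1path, hC1sub⟩, ⟨hC2path, hC2sub⟩, hsumc, harc_cov⟩ hle
  have hw_cyc : w.IsCycle := hw_hole.1.1
  have hw_ind := hw_hole.1.2
  have hsupP : ∀ z ∈ P.support, z ∈ w.support := by
    intro z hz
    have hz' : z ∈ suppSet P ∪ suppSet C2 := Or.inl hz
    rw [← hw_supp] at hz'
    exact hz'
  have hsupC2 : ∀ z ∈ C2.support, z ∈ w.support := by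
    intro z hz
    have hz' : z ∈ suppSet P ∪ suppSet C2 := Or.inr hz
    rw [← hw_supp] at hz'
    exact hz'
  have hsubP : ∀ e ∈ P.edges, e ∈ w.edges := by
    intro e he
    exact Sym2.ind (fun a b he => hw_ind a b
      (hsupP a (mem_support_of_mem_edge he (by simp)))
      (hsupP b (mem_support_of_mem_edge he (by simp)))
      (P.adj_of_mem_edges he)) e he
  have hsubC2 : ∀ e ∈ C2.edges, e ∈ w.edges := by
    intro e he
    exact Sym2.ind (fun a b he => hw_ind a b
      (hsupC2 a (mem_support_of_mem_edge he (by simp)))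
      (hsupC2 b (mem_support_of_mem_edge he (by simp)))
      (C2.adj_of_mem_edges he)) e he
  rcases two_paths_in_cycle hw_cyc P C2 huv hPpath hC2path hsubP hsubC2 with h | hsum2
  · omega
  · have hPne : P.length ≠ C1.length := by
      intro hPC1
      apply hnotgood
      have hwc : w.length = c.length := by omega
      refine ⟨C2, ⟨hC2path, hC2sub⟩, rw', w, ⟨⟨hw_hole, ?_⟩, ?_⟩, hw_supp⟩
      · rw [hwc]; exact hc_even
      · intro y w'' hw''
        have := hc_min y w'' hw''
        omega
    have hsh : cycleDist G c u v - 1 ≤ P.length := hshallow.1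
    have hC1pos : 1 ≤ C1.length := by
      rcases Nat.eq_zero_or_pos C1.length with h0 | h
      · exact absurd (Walk.eq_of_length_eq_zero h0) huv
      · exact h
    omega
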